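/- In the influenced leader system on a strongly connected weighted directed graph with fixed leader set S0 ≠ ∅ and positive stubbornness values, the average opinion μ, as a set function on subsets of V ∖ S0, is monotone and submodular: for all S1 ⊆ T1 ⊆ V ∖ S0 one has μ(S1) ≤ μ(T1), and for all S1 ⊆ T1 ⊆ V ∖ S0 and u ∈ V ∖ (S0 ∪ T1) one has μ(T1 ∪ {u}) − μ(T1) ≤ μ(S1 ∪ {u}) − μ(S1). -/

import Mathlib

open Matrix BigOperators

/-- Maximum principle: for `M = D - A + diag c` with `A` nonnegative, `d` the row
sums of `A`, `c ≥ 0` and `c > 0` on a nonempty set `S0` reachable from everywhere,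
`M x ≥ 0` (written out row-wise) implies `x ≥ 0`. -/
lemma stmt7_key {n : ℕ} (A : Matrix (Fin n) (Fin n) ℝ) (hA : ∀ u v, 0 ≤ A u v)
    (hconn : ∀ u v : Fin n, Relation.ReflTransGen (fun a b => 0 < A a b) u v)
    (d : Fin n → ℝ) (hd : ∀ u, d u = ∑ v, A u v)
    (S0 : Finset (Fin n)) (hS0 : S0.Nonempty)
    (c : Fin n → ℝ) (hc : ∀ v, 0 ≤ c v) (hcS0 : ∀ v ∈ S0, 0 < c v)
    (x : Fin n → ℝ)
    (hb : ∀ v, 0 ≤ d v * x v - (∑ w, A v w * x w) + c v * x v) :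
    ∀ v, 0 ≤ x v := by
  by_contra hcon
  push_neg at hcon
  obtain ⟨v1, hv1⟩ := hcon
  obtain ⟨v0, -, hv0⟩ := Finset.exists_min_image Finset.univ x ⟨v1, Finset.mem_univ v1⟩
  have hv0min : ∀ w, x v0 ≤ x w := fun w => hv0 w (Finset.mem_univ w)
  have hm : x v0 < 0 := lt_of_le_of_lt (hv0min v1) hv1
  have hrow : ∀ a, 0 ≤ (∑ w, A a w * (x a - x w)) + c a * x a := by
    intro a
    have := hb a
    have hda : d a * x a = ∑ w, A a w * x a := by rw [hd a, Finset.sum_mul]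
    calc (0:ℝ) ≤ d a * x a - (∑ w, A a w * x w) + c a * x a := this
      _ = (∑ w, A a w * (x a - x w)) + c a * x a := by
          rw [hda, ← Finset.sum_sub_distrib]
          congr 1
          exact Finset.sum_congr rfl fun w _ => by ring
  have hstep : ∀ a b, x a = x v0 → 0 < A a b → x b = x v0 := by
    intro a b ha hab
    have h1 := hrow a
    rw [ha] at h1
    have hterm : ∀ w ∈ Finset.univ, A a w * (x v0 - x w) ≤ 0 := fun w _ =>
      mul_nonpos_of_nonneg_of_nonpos (hA a w) (by linarith [hv0min w])
    have hcterm : c a * x v0 ≤ 0 := mul_nonpos_of_nonneg_of_nonpos (hc a) hm.le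
    have hsum0 : (∑ w, A a w * (x v0 - x w)) = 0 :=
      le_antisymm (Finset.sum_nonpos hterm) (by linarith)
    have := (Finset.sum_eq_zero_iff_of_nonpos hterm).mp hsum0 b (Finset.mem_univ b)
    have : x v0 - x b = 0 := by
      rcases mul_eq_zero.mp this with h | h
      · exact absurd h (ne_of_gt hab)
      · exact h
    linarith
  obtain ⟨s, hs⟩ := hS0
  have hxs : x s = x v0 := by
    have hpath := hconn v0 s
    clear hs
    induction hpath with
    | refl => rfl
    | tail _ e ih => exact hstep _ _ ih e
  have h1 := hrow s
  rw [hxs] at h1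
  have hterm : ∀ w ∈ Finset.univ, A s w * (x v0 - x w) ≤ 0 := fun w _ =>
    mul_nonpos_of_nonneg_of_nonpos (hA s w) (by linarith [hv0min w])
  have : c s * x v0 < 0 := mul_neg_of_pos_of_neg (hcS0 s hs) hm
  have := Finset.sum_nonpos hterm
  linarith

/-- in the influenced leader system on a strongly connected weighted
directed graph with fixed leader set `S0 ≠ ∅` and positive stubbornness values, the
average opinion `μ` is monotone and submodular as a set function of the leader set
`S1 ⊆ V ∖ S0`. -/
theorem stmt7
    (n : ℕ) (hn : 2 ≤ n)
    (A : Matrix (Fin n) (Fin n) ℝ)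
    (hA : ∀ u v, 0 ≤ A u v)
    (hconn : ∀ u v : Fin n, Relation.ReflTransGen (fun a b => 0 < A a b) u v)
    (d : Fin n → ℝ) (hd : d = fun u => ∑ v, A u v) (hdpos : ∀ u, 0 < d u)
    (W : Matrix (Fin n) (Fin n) ℝ)
    (hW : W = Aᵀ * Matrix.diagonal (fun u => (d u)⁻¹))
    (L : Matrix (Fin n) (Fin n) ℝ) (hL : L = Matrix.diagonal d * (1 - Wᵀ))
    (S0 : Finset (Fin n)) (hS0 : S0.Nonempty)
    -- stubbornness values:
    (κ : Fin n → ℝ) (hκ : ∀ v, 0 < κ v)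
    -- for every admissible leader set `S1`, the matrix `L + E^{S0 ∪ S1} K` is
    -- invertible:
    (hinv : ∀ S1 : Finset (Fin n), S1 ⊆ S0ᶜ → IsUnit
      (L + Matrix.diagonal (fun v => if v ∈ S0 ∪ S1 then (1 : ℝ) else 0) *
        Matrix.diagonal κ).det)
    -- `xhat S1 = (L + E^{S0 ∪ S1} K)⁻¹ E^{S1} K 1` is the steady-state opinion vector:
    (xhat : Finset (Fin n) → Fin n → ℝ)
    (hx : ∀ S1 : Finset (Fin n), xhat S1 =
      (L + Matrix.diagonal (fun v => if v ∈ S0 ∪ S1 then (1 : ℝ) else 0) *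
        Matrix.diagonal κ)⁻¹.mulVec
        ((Matrix.diagonal (fun v => if v ∈ S1 then (1 : ℝ) else 0) *
          Matrix.diagonal κ).mulVec (fun _ => 1)))
    -- the average opinion:
    (μ : Finset (Fin n) → ℝ) (hμ : μ = fun S1 => (n : ℝ)⁻¹ * ∑ v, xhat S1 v) :
    (∀ S1 T1 : Finset (Fin n), S1 ⊆ T1 → T1 ⊆ S0ᶜ → μ S1 ≤ μ T1) ∧
    (∀ S1 T1 : Finset (Fin n), ∀ u : Fin n, S1 ⊆ T1 → T1 ⊆ S0ᶜ →
      u ∉ S0 → u ∉ T1 →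
      μ (insert u T1) - μ T1 ≤ μ (insert u S1) - μ S1) := by
  subst hμ
  have hd' : ∀ u, d u = ∑ v, A u v := fun u => by rw [hd]
  -- entry formula for the Laplacian
  have hLe : ∀ v w, L v w = (if v = w then d v else 0) - A v w := by
    intro v w
    rw [hL, hW]
    simp only [Matrix.diagonal_mul, Matrix.sub_apply, Matrix.one_apply,
      Matrix.transpose_apply, Matrix.mul_diagonal, Matrix.transpose_apply]
    have hne : d v ≠ 0 := ne_of_gt (hdpos v)
    by_cases h : v = w
    · subst h; rw [if_pos rfl]; field_simp; simp
    · simp only [if_neg h]; field_simp; ring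
  -- row formula for `(L + diag c') x`
  have hrow : ∀ (c' x : Fin n → ℝ) (v : Fin n),
      ((L + Matrix.diagonal c').mulVec x) v
        = d v * x v - (∑ w, A v w * x w) + c' v * x v := by
    intro c' x v
    simp only [Matrix.mulVec, dotProduct, Matrix.add_apply,
      Matrix.diagonal_apply, hLe, sub_mul, add_mul, ite_mul, zero_mul,
      Finset.sum_add_distrib, Finset.sum_sub_distrib, Finset.sum_ite_eq,
      Finset.mem_univ, if_true]
  -- the maximum principle specialized to the present situation
  have key' : ∀ (c' : Fin n → ℝ), (∀ v, 0 ≤ c' v) → (∀ v ∈ S0, 0 < c' v) →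
      ∀ x : Fin n → ℝ,
      (∀ v, 0 ≤ d v * x v - (∑ w, A v w * x w) + c' v * x v) → ∀ v, 0 ≤ x v :=
    fun c' h1 h2 x h3 => stmt7_key A hA hconn d hd' S0 hS0 c' h1 h2 x h3
  -- determinant hypothesis, diagonal products merged
  have hdd : ∀ (f g : Fin n → ℝ), Matrix.diagonal f * Matrix.diagonal g
      = Matrix.diagonal (fun v => f v * g v) := by
    intro f g; rw [Matrix.diagonal_mul_diagonal]
  have hdet : ∀ S : Finset (Fin n), S ⊆ S0ᶜ → IsUnit
      (L + Matrix.diagonal (fun v => (if v ∈ S0 ∪ S then (1:ℝ) else 0) * κ v)).det := by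
    intro S hS
    have h := hinv S hS
    rwa [hdd] at h
  -- row formula for `(L + diag c')⁻¹ g`
  have hInvE : ∀ (c' : Fin n → ℝ), IsUnit (L + Matrix.diagonal c').det →
      ∀ (g : Fin n → ℝ) (v : Fin n),
      d v * ((L + Matrix.diagonal c')⁻¹.mulVec g) v
        - (∑ w, A v w * ((L + Matrix.diagonal c')⁻¹.mulVec g) w)
        + c' v * ((L + Matrix.diagonal c')⁻¹.mulVec g) v = g v := by
    intro c' hdet' g v
    have h1 : (L + Matrix.diagonal c').mulVec ((L + Matrix.diagonal c')⁻¹.mulVec g)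
        = g := by
      rw [Matrix.mulVec_mulVec, Matrix.mul_nonsing_inv _ hdet', Matrix.one_mulVec]
    rw [← hrow]
    rw [h1]
  -- `diag f • 1 = f`
  have hdv : ∀ f : Fin n → ℝ, (Matrix.diagonal f).mulVec (fun _ => (1:ℝ)) = f := by
    intro f; funext v; rw [Matrix.mulVec_diagonal, mul_one]
  -- closed form for xhat
  have hxS : ∀ S : Finset (Fin n), xhat S =
      (L + Matrix.diagonal (fun v => (if v ∈ S0 ∪ S then (1:ℝ) else 0) * κ v))⁻¹.mulVec
        (fun v => (if v ∈ S then (1:ℝ) else 0) * κ v) := by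
    intro S
    rw [hx S, hdd, hdd, hdv]
  -- the fundamental row equations satisfied by xhat
  have hE : ∀ S : Finset (Fin n), S ⊆ S0ᶜ → ∀ v,
      d v * xhat S v - (∑ w, A v w * xhat S w)
        + ((if v ∈ S0 ∪ S then (1:ℝ) else 0) * κ v) * xhat S v
        = (if v ∈ S then (1:ℝ) else 0) * κ v := by
    intro S hS v
    rw [hxS S]
    exact hInvE _ (hdet S hS) _ v
  -- positivity facts about the weight function
  have hcnn : ∀ (S : Finset (Fin n)) v, 0 ≤ (if v ∈ S0 ∪ S then (1:ℝ) else 0) * κ v := by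
    intro S v
    by_cases h : v ∈ S0 ∪ S <;> simp [h, (hκ v).le]
  have hcS0 : ∀ (S : Finset (Fin n)), ∀ v ∈ S0,
      0 < (if v ∈ S0 ∪ S then (1:ℝ) else 0) * κ v := by
    intro S v hv
    simp [Finset.mem_union, hv, hκ v]
  -- sum linearity helpers
  have hsum2 : ∀ (v : Fin n) (p q : Fin n → ℝ),
      (∑ w, A v w * (p w - q w)) = (∑ w, A v w * p w) - (∑ w, A v w * q w) := by
    intro v p q
    rw [← Finset.sum_sub_distrib]
    exact Finset.sum_congr rfl fun w _ => by ring
  have hsum3 : ∀ (v : Fin n) (p q r : Fin n → ℝ) (α : ℝ),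
      (∑ w, A v w * (p w - q w - α * r w))
        = (∑ w, A v w * p w) - (∑ w, A v w * q w) - α * (∑ w, A v w * r w) := by
    intro v p q r α
    rw [Finset.mul_sum, ← Finset.sum_sub_distrib, ← Finset.sum_sub_distrib]
    exact Finset.sum_congr rfl fun w _ => by ring
  -- xhat is nonnegative
  have hnn : ∀ S : Finset (Fin n), S ⊆ S0ᶜ → ∀ v, 0 ≤ xhat S v := by
    intro S hS
    refine key' _ (hcnn S) (hcS0 S) _ ?_
    intro v
    rw [hE S hS v]
    by_cases h : v ∈ S <;> simp [h, (hκ v).le]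
  -- xhat is at most one
  have hle1 : ∀ S : Finset (Fin n), S ⊆ S0ᶜ → ∀ v, xhat S v ≤ 1 := by
    intro S hS
    have hbody : ∀ w, 0 ≤ d w * (1 - xhat S w) - (∑ z, A w z * (1 - xhat S z))
        + ((if w ∈ S0 ∪ S then (1:ℝ) else 0) * κ w) * (1 - xhat S w) := by
      intro w
      have hs := hsum2 w (fun _ => 1) (xhat S)
      have hEw := hE S hS w
      have hdw : (∑ z, A w z * 1) = d w := by simp [hd' w]
      have hsign : (if w ∈ S then (1:ℝ) else 0) * κ w
          ≤ (if w ∈ S0 ∪ S then (1:ℝ) else 0) * κ w := by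
        by_cases h1 : w ∈ S <;> by_cases h0 : w ∈ S0 <;>
          simp [h1, h0, Finset.mem_union, (hκ w).le]
      rw [hs, hdw]
      nlinarith [hEw]
    have h := key' _ (hcnn S) (hcS0 S) (fun w => 1 - xhat S w) hbody
    intro v
    have h2 : 0 ≤ 1 - xhat S v := h v
    linarith
  -- componentwise monotonicity
  have hmono : ∀ S T : Finset (Fin n), S ⊆ T → T ⊆ S0ᶜ → ∀ v, xhat S v ≤ xhat T v := by
    intro S T hST hT
    have hS : S ⊆ S0ᶜ := hST.trans hT
    have hbody : ∀ v, 0 ≤ d v * (xhat T v - xhat S v)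
        - (∑ w, A v w * (xhat T w - xhat S w))
        + ((if v ∈ S0 ∪ T then (1:ℝ) else 0) * κ v) * (xhat T v - xhat S v) := by
      intro v
      rw [hsum2 v (xhat T) (xhat S)]
      have hET := hE T hT v
      have hES := hE S hS v
      have h0 := hnn S hS v
      have h1 := hle1 S hS v
      have hκv := (hκ v).le
      by_cases hvS : v ∈ S <;> by_cases hvT : v ∈ T <;> by_cases hv0 : v ∈ S0 <;>
        simp only [hvS, hvT, hv0, Finset.mem_union, if_true, if_false,
          or_true, true_or, or_self, or_false, false_or, one_mul, zero_mul]
          at hET hES ⊢ <;>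
        first
          | nlinarith [hET, hES]
          | exact absurd (hST hvS) hvT
    have h := key' _ (hcnn T) (hcS0 T) (fun w => xhat T w - xhat S w) hbody
    intro v
    have h2 : 0 ≤ xhat T v - xhat S v := h v
    linarith
  constructor
  · -- monotonicity of μ
    intro S1 T1 hST hT
    simp only
    have := Finset.sum_le_sum (s := Finset.univ) (fun v _ => hmono S1 T1 hST hT v)
    have hninv : (0:ℝ) ≤ (n : ℝ)⁻¹ := by positivity
    exact mul_le_mul_of_nonneg_left this hninv
  · -- submodularity of μ
    intro S1 T1 u hST hT hu0 huT
    have hS1 : S1 ⊆ S0ᶜ := hST.trans hT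
    have huS : u ∉ S1 := fun h => huT (hST h)
    have hTu : insert u T1 ⊆ S0ᶜ := by
      intro v hv
      rcases Finset.mem_insert.mp hv with h | h
      · subst h; exact Finset.mem_compl.mpr hu0
      · exact hT h
    have hSu : insert u S1 ⊆ S0ᶜ := by
      intro v hv
      rcases Finset.mem_insert.mp hv with h | h
      · subst h; exact Finset.mem_compl.mpr hu0
      · exact hS1 (by exact h)
    -- the auxiliary resolvent columns
    set yS : Fin n → ℝ :=
      (L + Matrix.diagonal
        (fun v => (if v ∈ S0 ∪ insert u S1 then (1:ℝ) else 0) * κ v))⁻¹.mulVec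
        (fun w => if w = u then (1:ℝ) else 0) with hyS
    set yT : Fin n → ℝ :=
      (L + Matrix.diagonal
        (fun v => (if v ∈ S0 ∪ insert u T1 then (1:ℝ) else 0) * κ v))⁻¹.mulVec
        (fun w => if w = u then (1:ℝ) else 0) with hyT
    have hEyS : ∀ v, d v * yS v - (∑ w, A v w * yS w)
        + ((if v ∈ S0 ∪ insert u S1 then (1:ℝ) else 0) * κ v) * yS v
        = (if v = u then (1:ℝ) else 0) :=
      fun v => hInvE _ (hdet _ hSu) _ v
    have hEyT : ∀ v, d v * yT v - (∑ w, A v w * yT w)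
        + ((if v ∈ S0 ∪ insert u T1 then (1:ℝ) else 0) * κ v) * yT v
        = (if v = u then (1:ℝ) else 0) :=
      fun v => hInvE _ (hdet _ hTu) _ v
    -- yT is nonnegative
    have hyTnn : ∀ v, 0 ≤ yT v := by
      refine key' (fun v => (if v ∈ S0 ∪ insert u T1 then (1:ℝ) else 0) * κ v)
        (hcnn _) (hcS0 _) yT ?_
      intro v
      rw [hEyT v]
      by_cases h : v = u <;> simp [h]
    have hySnn : ∀ v, 0 ≤ yS v := by
      refine key' (fun v => (if v ∈ S0 ∪ insert u S1 then (1:ℝ) else 0) * κ v)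
        (hcnn _) (hcS0 _) yS ?_
      intro v
      rw [hEyS v]
      by_cases h : v = u <;> simp [h]
    -- comparison of the resolvent columns
    have hycmp : ∀ v, yT v ≤ yS v := by
      have hbody : ∀ v, 0 ≤ d v * (yS v - yT v) - (∑ w, A v w * (yS w - yT w))
          + ((if v ∈ S0 ∪ insert u S1 then (1:ℝ) else 0) * κ v) * (yS v - yT v) := by
        intro v
        rw [hsum2 v yS yT]
        have h1 := hEyS v
        have h2 := hEyT v
        have hcle : ((if v ∈ S0 ∪ insert u S1 then (1:ℝ) else 0) * κ v)
            ≤ ((if v ∈ S0 ∪ insert u T1 then (1:ℝ) else 0) * κ v) := by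
          by_cases hv : v ∈ S0 ∪ insert u S1
          · have hv' : v ∈ S0 ∪ insert u T1 := by
              rcases Finset.mem_union.mp hv with h | h
              · exact Finset.mem_union_left _ h
              · rcases Finset.mem_insert.mp h with h | h
                · exact Finset.mem_union_right _ (Finset.mem_insert.mpr (Or.inl h))
                · exact Finset.mem_union_right _
                    (Finset.mem_insert.mpr (Or.inr (hST h)))
            rw [if_pos hv, if_pos hv']
          · simp only [hv, if_false, zero_mul]
            exact hcnn _ v
        nlinarith [hyTnn v]
      have h := key' _ (hcnn (insert u S1)) (hcS0 (insert u S1))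
        (fun w => yS w - yT w) hbody
      intro v
      have h2 : 0 ≤ yS v - yT v := h v
      linarith
    -- the increment identities
    have hdelta : ∀ (S : Finset (Fin n)), S ⊆ S0ᶜ → u ∉ S →
        ∀ (y : Fin n → ℝ),
        (∀ v, d v * y v - (∑ w, A v w * y w)
          + ((if v ∈ S0 ∪ insert u S then (1:ℝ) else 0) * κ v) * y v
          = (if v = u then (1:ℝ) else 0)) →
        ∀ v, xhat (insert u S) v - xhat S v = (κ u * (1 - xhat S u)) * y v := by
      intro S hS huSmem y hEy v
      have hSu' : insert u S ⊆ S0ᶜ := by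
        intro w hw
        rcases Finset.mem_insert.mp hw with h | h
        · subst h; exact Finset.mem_compl.mpr hu0
        · exact hS h
      set α : ℝ := κ u * (1 - xhat S u) with hα
      -- the difference vector satisfies a homogeneous system
      have hMw : (L + Matrix.diagonal
          (fun w => (if w ∈ S0 ∪ insert u S then (1:ℝ) else 0) * κ w)).mulVec
          (fun w => xhat (insert u S) w - xhat S w - α * y w) = fun _ => (0:ℝ) := by
        funext w
        have hgoal : ((L + Matrix.diagonal
            (fun z => (if z ∈ S0 ∪ insert u S then (1:ℝ) else 0) * κ z)).mulVec
            (fun z => xhat (insert u S) z - xhat S z - α * y z)) w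
            = d w * (xhat (insert u S) w - xhat S w - α * y w)
              - (∑ z, A w z * (xhat (insert u S) z - xhat S z - α * y z))
              + ((if w ∈ S0 ∪ insert u S then (1:ℝ) else 0) * κ w)
                * (xhat (insert u S) w - xhat S w - α * y w) :=
          hrow _ _ w
        rw [hgoal, hsum3 w (xhat (insert u S)) (xhat S) y α]
        have h1 := hE (insert u S) hSu' w
        have h2 := hE S hS w
        have h3 := hEy w
        by_cases hwu : w = u
        · subst hwu
          simp only [Finset.mem_union, Finset.mem_insert, hu0, huSmem, or_false,
            false_or, true_or, or_true, if_true, if_false, eq_self_iff_true,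
            ite_true, ite_false, one_mul, zero_mul, mul_zero, add_zero]
            at h1 h2 h3 ⊢
          linear_combination h1 - h2 - α * h3 - hα
        · simp only [Finset.mem_union, Finset.mem_insert, hwu, false_or,
            if_false, ite_false] at h1 h2 h3 ⊢
          linear_combination h1 - h2 - α * h3
      -- hence it vanishes
      have hzero : (fun w => xhat (insert u S) w - xhat S w - α * y w)
          = fun _ => (0:ℝ) := by
        have hcan : (L + Matrix.diagonal
            (fun w => (if w ∈ S0 ∪ insert u S then (1:ℝ) else 0) * κ w))⁻¹.mulVec
            ((L + Matrix.diagonal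
            (fun w => (if w ∈ S0 ∪ insert u S then (1:ℝ) else 0) * κ w)).mulVec
            (fun w => xhat (insert u S) w - xhat S w - α * y w))
            = (fun w => xhat (insert u S) w - xhat S w - α * y w) := by
          rw [Matrix.mulVec_mulVec, Matrix.nonsing_inv_mul _ (hdet _ hSu'),
            Matrix.one_mulVec]
        rw [hMw] at hcan
        rw [← hcan]
        have h0 : (fun _ => (0:ℝ)) = (0 : Fin n → ℝ) := rfl
        rw [h0, Matrix.mulVec_zero]
      have h5 : xhat (insert u S) v - xhat S v - α * y v = 0 := congrFun hzero v
      linear_combination h5 + y v * hα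
    have hdS := hdelta S1 hS1 huS yS hEyS
    have hdT := hdelta T1 hT huT yT hEyT
    -- pointwise submodularity
    have hpt : ∀ v, xhat (insert u T1) v - xhat T1 v
        ≤ xhat (insert u S1) v - xhat S1 v := by
      intro v
      rw [hdS v, hdT v]
      have hαT : (0:ℝ) ≤ κ u * (1 - xhat T1 u) :=
        mul_nonneg (hκ u).le (by linarith [hle1 T1 hT u])
      have hαle : κ u * (1 - xhat T1 u) ≤ κ u * (1 - xhat S1 u) :=
        mul_le_mul_of_nonneg_left (by linarith [hmono S1 T1 hST hT u]) (hκ u).le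
      exact mul_le_mul hαle (hycmp v) (hyTnn v) (le_trans hαT hαle)
    simp only
    rw [← mul_sub, ← mul_sub, ← Finset.sum_sub_distrib, ← Finset.sum_sub_distrib]
    have hninv : (0:ℝ) ≤ (n : ℝ)⁻¹ := by positivity
    exact mul_le_mul_of_nonneg_left (Finset.sum_le_sum fun v _ => hpt v) hninv
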